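/- Let F(z) = (−z⁵ + 5z)/(5z⁴ − 1). Then F is equivariant with respect to the group of Möbius transformations generated by σ₁(z) = iz and σ₂(z) = (z + i)/(z − i); in particular, F(iz) = i·F(z) and F((z + i)/(z − i)) = (F(z) + i)/(F(z) − i) hold as identities of rational functions (i.e., for all z ∈ ℂ where both sides are defined). -/

import Mathlib

open Complex in
/-- `F(z) = (−z⁵ + 5z)/(5z⁴ − 1)` is equivariant with respect to the group of Möbius
transformations generated by `σ₁(z) = iz` and `σ₂(z) = (z + i)/(z − i)`: the identities
`F(iz) = i·F(z)` and `F((z + i)/(z − i)) = (F(z) + i)/(F(z) − i)` hold for all `z ∈ ℂ`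
where both sides are defined (equivariance with respect to the two generators is equivalent
to equivariance with respect to the whole group). -/
theorem stmt12 :
    (∀ z : ℂ, 5 * z ^ 4 - 1 ≠ 0 →
      (-(I * z) ^ 5 + 5 * (I * z)) / (5 * (I * z) ^ 4 - 1) =
        I * ((-z ^ 5 + 5 * z) / (5 * z ^ 4 - 1))) ∧
    (∀ z w : ℂ, z - I ≠ 0 → w = (z + I) / (z - I) → 5 * w ^ 4 - 1 ≠ 0 →
      5 * z ^ 4 - 1 ≠ 0 → (-z ^ 5 + 5 * z) / (5 * z ^ 4 - 1) - I ≠ 0 →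
      (-w ^ 5 + 5 * w) / (5 * w ^ 4 - 1) =
        ((-z ^ 5 + 5 * z) / (5 * z ^ 4 - 1) + I) /
          ((-z ^ 5 + 5 * z) / (5 * z ^ 4 - 1) - I)) := by
  have hI4 : (I : ℂ) ^ 4 = 1 := by
    rw [show (4 : ℕ) = 2 * 2 from rfl, pow_mul, I_sq]; norm_num
  constructor
  · intro z hz
    have hD' : 5 * (I * z) ^ 4 - 1 ≠ 0 := by
      rw [mul_pow, hI4, one_mul]; exact hz
    rw [mul_div_assoc', div_eq_div_iff hD' hz]
    linear_combination (-24 * z ^ 5 * I ^ 3 + 24 * z ^ 5 * I) * I_sq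
  · intro z w hz hw hw4 hz4 hF
    have hzi5 : (z - I) ^ 5 ≠ 0 := pow_ne_zero _ hz
    have hND : (-z ^ 5 + 5 * z) - I * (5 * z ^ 4 - 1) ≠ 0 := by
      intro h
      apply hF
      rw [sub_eq_zero, div_eq_iff hz4]
      linear_combination h
    have hwB : 5 * w ^ 4 - 1 =
        (5 * (z + I) ^ 4 * (z - I) - (z - I) ^ 5) / (z - I) ^ 5 := by
      rw [hw, div_pow]
      field_simp
    have hB : 5 * (z + I) ^ 4 * (z - I) - (z - I) ^ 5 ≠ 0 := by
      intro h
      apply hw4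
      rw [hwB, h, zero_div]
    have hA : (-w ^ 5 + 5 * w) / (5 * w ^ 4 - 1) =
        (-(z + I) ^ 5 + 5 * (z + I) * (z - I) ^ 4) /
          (5 * (z + I) ^ 4 * (z - I) - (z - I) ^ 5) := by
      rw [hwB, hw, div_pow]
      field_simp
    have hR : ((-z ^ 5 + 5 * z) / (5 * z ^ 4 - 1) + I) /
          ((-z ^ 5 + 5 * z) / (5 * z ^ 4 - 1) - I) =
        ((-z ^ 5 + 5 * z) + I * (5 * z ^ 4 - 1)) /
          ((-z ^ 5 + 5 * z) - I * (5 * z ^ 4 - 1)) := by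
      rw [div_add' _ _ _ hz4, div_sub' hz4,
        show -z ^ 5 + 5 * z - (5 * z ^ 4 - 1) * I = -z ^ 5 + 5 * z - I * (5 * z ^ 4 - 1) by ring,
        div_div_div_cancel_right₀ hz4]
    rw [hA, hR, div_eq_div_iff hB hND]
    linear_combination (192 * z ^ 5 * I ^ 3 - 192 * z ^ 5 * I) * I_sq
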